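/- Let $V=[n]$ with $n \ge ra$, $r > k \ge 1$, $a \ge 3$, and $0 \le i \le (\lfloor n/(a-1) \rfloor - k)/2$. Let $\mathcal{T} = \{T_1, \ldots, T_{a-1}\}$ be a family of $(k+2i)$-element subsets of $V$ with $S := T_1 \cap T_2 \ne \emptyset$, let $s = |S|$, let $R$ be an $s$-element subset of $V \setminus (T_1 \cup \cdots \cup T_{a-1})$, and set $T_1^* = (T_1 \setminus S) \cup R$ and $\mathcal{T}^* = \{T_1^*, T_2, \ldots, T_{a-1}\}$. Then the number of $r$-element subsets of $V$ that capture $\mathcal{T}$ is at most the number of $r$-element subsets of $V$ that capture $\mathcal{T}^*$. -/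

import Mathlib

open Finset

def capt (n r c : ℕ) {d : ℕ} (U : Fin d → Finset (Fin n)) : Finset (Finset (Fin n)) :=
  (Finset.powersetCard r (Finset.univ : Finset (Fin n))).filter
    (fun E => ∃ j, c ≤ (E ∩ U j).card)

lemma mem_capt {n r c d : ℕ} {U : Fin d → Finset (Fin n)} {E : Finset (Fin n)} :
    E ∈ capt n r c U ↔ E.card = r ∧ ∃ j, c ≤ (E ∩ U j).card := by
  simp [capt, Finset.mem_powersetCard_univ]

lemma swap_le {n r c d : ℕ} (U : Fin d → Finset (Fin n)) (j0 : Fin d) (x u : Fin n)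
    (hx : x ∈ U j0) (hu : ∀ j, u ∉ U j) :
    (capt n r c U).card ≤
      (capt n r c (Function.update U j0 ((U j0).erase x ∪ {u}))).card := by
  classical
  set V := Function.update U j0 ((U j0).erase x ∪ {u}) with hV
  have hVj0 : V j0 = (U j0).erase x ∪ {u} := Function.update_self _ _ _
  have hVj : ∀ j, j ≠ j0 → V j = U j := fun j hj => Function.update_of_ne hj _ _
  have hxu : x ≠ u := fun h => hu j0 (h ▸ hx)
  -- intersection identity for swapped sets
  have hEU : ∀ (E : Finset (Fin n)) (j : Fin d),
      (insert u (E.erase x)) ∩ U j = (E ∩ U j).erase x := by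
    intro E j; ext y
    simp only [mem_inter, mem_insert, mem_erase]
    constructor
    · rintro ⟨(rfl | ⟨hyx, hyE⟩), hyU⟩
      · exact absurd hyU (hu j)
      · exact ⟨hyx, hyE, hyU⟩
    · rintro ⟨hyx, hyE, hyU⟩; exact ⟨Or.inr ⟨hyx, hyE⟩, hyU⟩
  -- else-branch analysis
  have key : ∀ E : Finset (Fin n), (∃ j, c ≤ (E ∩ U j).card) →
      ¬ (∃ j, c ≤ (E ∩ V j).card) →
      x ∈ E ∧ u ∉ E ∧ (E ∩ U j0).card = c := by
    intro E hcap hnot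
    push_neg at hnot
    obtain ⟨j, hj⟩ := hcap
    have hjj0 : j = j0 := by
      by_contra h
      exact absurd hj (by rw [← hVj j h]; exact Nat.not_le.mpr (hnot j))
    subst hjj0
    have hlt : (E ∩ V j).card < c := hnot j
    have hsub1 : (E ∩ U j).erase x ⊆ E ∩ V j := by
      intro y hy
      rw [mem_erase, mem_inter] at hy
      rw [mem_inter, hVj0]
      exact ⟨hy.2.1, mem_union_left _ (mem_erase.mpr ⟨hy.1, hy.2.2⟩)⟩
    have hxE : x ∈ E := by
      by_contra hxE
      have : (E ∩ U j).erase x = E ∩ U j :=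
        erase_eq_of_notMem (fun h => hxE (mem_inter.mp h).1)
      exact absurd (le_trans hj (card_le_card (this ▸ hsub1))) (Nat.not_le.mpr hlt)
    have hxEU : x ∈ E ∩ U j := mem_inter.mpr ⟨hxE, hx⟩
    have hcarderase : ((E ∩ U j).erase x).card = (E ∩ U j).card - 1 :=
      card_erase_of_mem hxEU
    have hc1 : (E ∩ U j).card - 1 ≤ (E ∩ V j).card := by
      rw [← hcarderase]; exact card_le_card hsub1
    have huE : u ∉ E := by
      intro huE
      have hsub2 : insert u ((E ∩ U j).erase x) ⊆ E ∩ V j := by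
        intro y hy
        rcases mem_insert.mp hy with rfl | hy
        · exact mem_inter.mpr ⟨huE, by rw [hVj0]; exact mem_union_right _ (mem_singleton_self _)⟩
        · exact hsub1 hy
      have hunm : u ∉ (E ∩ U j).erase x := fun h => hu j (mem_inter.mp (erase_subset _ _ h)).2
      have := card_le_card hsub2
      rw [card_insert_of_notMem hunm, hcarderase] at this
      omega
    exact ⟨hxE, huE, by omega⟩
  apply Finset.card_le_card_of_injOn
    (fun E => if ∃ j, c ≤ (E ∩ V j).card then E else insert u (E.erase x))
  · -- maps to
    intro E hE
    rw [Finset.mem_coe, mem_capt] at hE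
    obtain ⟨hEcard, hEcap⟩ := hE
    by_cases h : ∃ j, c ≤ (E ∩ V j).card
    · simp only [if_pos h]
      exact mem_capt.mpr ⟨hEcard, h⟩
    · simp only [if_neg h]
      obtain ⟨hxE, huE, hcnt⟩ := key E hEcap h
      have hxe : u ∉ E.erase x := fun hh => huE (erase_subset _ _ hh)
      have hcard' : (insert u (E.erase x)).card = r := by
        rw [card_insert_of_notMem hxe, card_erase_of_mem hxE, hEcard]
        have : 0 < r := by rw [← hEcard]; exact card_pos.mpr ⟨x, hxE⟩
        omega
      refine mem_capt.mpr ⟨hcard', ⟨j0, ?_⟩⟩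
      -- insert u ((E ∩ U j0).erase x) ⊆ (insert u (E.erase x)) ∩ V j0
      have hxEU : x ∈ E ∩ U j0 := mem_inter.mpr ⟨hxE, hx⟩
      have hsub : insert u ((E ∩ U j0).erase x) ⊆ (insert u (E.erase x)) ∩ V j0 := by
        intro y hy
        rcases mem_insert.mp hy with rfl | hy
        · exact mem_inter.mpr ⟨mem_insert_self _ _,
            by rw [hVj0]; exact mem_union_right _ (mem_singleton_self _)⟩
        · rw [mem_erase, mem_inter] at hy
          refine mem_inter.mpr ⟨mem_insert_of_mem (mem_erase.mpr ⟨hy.1, hy.2.1⟩), ?_⟩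
          rw [hVj0]; exact mem_union_left _ (mem_erase.mpr ⟨hy.1, hy.2.2⟩)
      have hunm : u ∉ (E ∩ U j0).erase x := fun h => hu j0 (mem_inter.mp (erase_subset _ _ h)).2
      have hle := card_le_card hsub
      rw [card_insert_of_notMem hunm, card_erase_of_mem hxEU, hcnt] at hle
      have hc1 : 1 ≤ c := by
        push_neg at h
        have := h j0; omega
      omega
  · -- injective on capt U
    intro E1 hE1 E2 hE2 hf
    simp only at hf
    rw [Finset.mem_coe, mem_capt] at hE1 hE2
    by_cases h1 : ∃ j, c ≤ (E1 ∩ V j).card <;> by_cases h2 : ∃ j, c ≤ (E2 ∩ V j).card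
    · rwa [if_pos h1, if_pos h2] at hf
    · -- E1 if, E2 else : E1 = insert u (E2.erase x); show contradiction with E1 capturing U
      rw [if_pos h1, if_neg h2] at hf
      obtain ⟨hxE2, huE2, hcnt2⟩ := key E2 hE2.2 h2
      exfalso
      obtain ⟨j, hj⟩ := hE1.2
      rw [hf, hEU E2 j] at hj
      have hle : ((E2 ∩ U j).erase x).card ≤ (E2 ∩ U j).card := card_le_card (erase_subset _ _)
      by_cases hjj : j = j0
      · rw [hjj] at hj
        have : ((E2 ∩ U j0).erase x).card = c - 1 := by
          rw [card_erase_of_mem (mem_inter.mpr ⟨hxE2, hx⟩), hcnt2]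
        have hc1 : 1 ≤ c := by push_neg at h2; have := h2 j0; omega
        omega
      · push_neg at h2
        have := h2 j
        rw [hVj j hjj] at this
        omega
    · -- E1 else, E2 if : symmetric
      rw [if_neg h1, if_pos h2] at hf
      obtain ⟨hxE1, huE1, hcnt1⟩ := key E1 hE1.2 h1
      exfalso
      obtain ⟨j, hj⟩ := hE2.2
      rw [← hf, hEU E1 j] at hj
      by_cases hjj : j = j0
      · rw [hjj] at hj
        have : ((E1 ∩ U j0).erase x).card = c - 1 := by
          rw [card_erase_of_mem (mem_inter.mpr ⟨hxE1, hx⟩), hcnt1]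
        have hc1 : 1 ≤ c := by push_neg at h1; have := h1 j0; omega
        omega
      · push_neg at h1
        have := h1 j
        rw [hVj j hjj] at this
        have hle : ((E1 ∩ U j).erase x).card ≤ (E1 ∩ U j).card := card_le_card (erase_subset _ _)
        omega
    · -- both else
      rw [if_neg h1, if_neg h2] at hf
      obtain ⟨hxE1, huE1, -⟩ := key E1 hE1.2 h1
      obtain ⟨hxE2, huE2, -⟩ := key E2 hE2.2 h2
      have h1' : u ∉ E1.erase x := fun h => huE1 (erase_subset _ _ h)
      have h2' : u ∉ E2.erase x := fun h => huE2 (erase_subset _ _ h)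
      have : E1.erase x = E2.erase x := by
        have := congrArg (fun s => Finset.erase s u) hf
        simpa [erase_insert h1', erase_insert h2'] using this
      calc E1 = insert x (E1.erase x) := (insert_erase hxE1).symm
        _ = insert x (E2.erase x) := by rw [this]
        _ = E2 := insert_erase hxE2
lemma multi_le {n r c d : ℕ} (j0 : Fin d) :
    ∀ (s : ℕ) (S R : Finset (Fin n)) (U : Fin d → Finset (Fin n)),
      S.card = s → R.card = S.card → S ⊆ U j0 → (∀ j, Disjoint R (U j)) →
      (capt n r c U).card ≤ (capt n r c (Function.update U j0 ((U j0 \ S) ∪ R))).card := by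
  intro s
  induction s with
  | zero =>
      intro S R U hs hr hsub hdisj
      have hS0 : S = ∅ := card_eq_zero.mp hs
      have hR0 : R = ∅ := card_eq_zero.mp (by rw [hr, hs])
      subst hS0; subst hR0
      simp [Function.update_eq_self]
  | succ s ih =>
      intro S R U hs hr hsub hdisj
      obtain ⟨x, hxS⟩ := card_pos.mp (by omega : 0 < S.card)
      obtain ⟨uu, huR⟩ := card_pos.mp (by rw [hr]; omega : 0 < R.card)
      have hxU : x ∈ U j0 := hsub hxS
      have huU : ∀ j, uu ∉ U j := fun j h => disjoint_left.mp (hdisj j) huR h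
      have h1 := swap_le (c := c) (r := r) U j0 x uu hxU huU
      set V := Function.update U j0 ((U j0).erase x ∪ {uu}) with hVdef
      have hVj0 : V j0 = (U j0).erase x ∪ {uu} := Function.update_self _ _ _
      have hVj : ∀ j, j ≠ j0 → V j = U j := fun j hj => Function.update_of_ne hj _ _
      have hxuu : x ≠ uu := fun h => huU j0 (h ▸ hxU)
      have huS : uu ∉ S := fun h => huU j0 (hsub h)
      have hxR : x ∉ R := fun h => disjoint_left.mp (hdisj j0) h hxU
      have h2 := ih (S.erase x) (R.erase uu) V
        (by rw [card_erase_of_mem hxS, hs]; omega)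
        (by rw [card_erase_of_mem huR, card_erase_of_mem hxS, hr])
        (by
          intro y hy
          rw [mem_erase] at hy
          rw [hVj0]
          exact mem_union_left _ (mem_erase.mpr ⟨hy.1, hsub hy.2⟩))
        (by
          intro j
          by_cases hj : j = j0
          · subst hj
            rw [hVj0, disjoint_union_right]
            constructor
            · exact Finset.disjoint_of_subset_left (erase_subset _ _)
                (Finset.disjoint_of_subset_right (erase_subset _ _) (hdisj j))
            · simp [disjoint_singleton_right, notMem_erase]
          · rw [hVj j hj]
            exact Finset.disjoint_of_subset_left (erase_subset _ _) (hdisj j))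
      have hset : ((U j0).erase x ∪ {uu}) \ S.erase x ∪ R.erase uu = U j0 \ S ∪ R := by
        ext y
        simp only [mem_union, mem_sdiff, mem_erase, mem_singleton]
        by_cases hyx : y = x <;> by_cases hyu : y = uu
        · exact absurd (hyx ▸ hyu) hxuu
        · subst hyx; simp [hxS, hxR, hyu]
        · subst hyu; simp [huR, huS, hxuu, Ne.symm hxuu, huU j0]
        · simp [hyx, hyu]
      have heq : Function.update V j0 (V j0 \ S.erase x ∪ R.erase uu)
           = Function.update U j0 (U j0 \ S ∪ R) := by
        rw [hVdef, Function.update_self, Function.update_idem, hset]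
      rw [heq] at h2
      exact le_trans h1 h2

/-- Replacing `T₁` by `T₁* = (T₁ \ S) ∪ R`, where `S = T₁ ∩ T₂ ≠ ∅` and `R`
is a fresh `|S|`-set, does not decrease the number of `r`-sets capturing the family. -/
theorem stmt_3 (n r k a i : ℕ) (hn : r * a ≤ n) (hk : 1 ≤ k) (hkr : k < r) (ha : 3 ≤ a)
    (hi : k + 2 * i ≤ n / (a - 1))
    (T : Fin (a - 1) → Finset (Fin n))
    (hT : ∀ j, (T j).card = k + 2 * i)
    (S R : Finset (Fin n))
    (hS : S = T ⟨0, by omega⟩ ∩ T ⟨1, by omega⟩)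
    (hSne : S.Nonempty)
    (hR : R.card = S.card)
    (hRdisj : ∀ j, Disjoint R (T j))
    (Tstar : Fin (a - 1) → Finset (Fin n))
    (hTstar : Tstar = Function.update T ⟨0, by omega⟩ ((T ⟨0, by omega⟩ \ S) ∪ R)) :
    ((Finset.powersetCard r (Finset.univ : Finset (Fin n))).filter
        (fun E => ∃ j, k + i ≤ (E ∩ T j).card)).card ≤
      ((Finset.powersetCard r (Finset.univ : Finset (Fin n))).filter
        (fun E => ∃ j, k + i ≤ (E ∩ Tstar j).card)).card := by
  classical
  have hSsub : S ⊆ T ⟨0, by omega⟩ := by rw [hS]; exact Finset.inter_subset_left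
  subst hTstar
  exact multi_le (n := n) (r := r) (c := k + i) ⟨0, by omega⟩ S.card S R T rfl hR hSsub hRdisj
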